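/- Suppose α_i ≥ 0 for all i ∈ M⁺, r_{ij} ≥ 0 for all i ∈ M⁺ and j ∈ N, u₀ > 0, u_j ≥ 0 for all j ∈ N, and θ_{ij} > 0 for all i ∈ M and j ∈ N, and let E ⊆ N × N. Then the optimal value of (QAP-IDM) equals the optimal value of (QAP-IDM-LP): sup{ α_0·(Σ_{j∈N} r_{0j}u_j x_{0j})/(u₀ + Σ_{j∈N} u_j x_{0j}) + Σ_{i∈M} α_i·Σ_{j∈N} r_{ij}θ_{ij}x_{ij} : x_i ∈ {0,1}ⁿ for all i ∈ M⁺, x_0 ≥ x_i componentwise for all i ∈ M, and x_{0j} ≥ x_{0k} for all (j,k) ∈ E } = sup{ α_0·Σ_{j∈N} r_{0j}u_j y_j + Σ_{i∈M} α_i·Σ_{j∈N} r_{ij}θ_{ij}x_j : (x, y₀, y) ∈ ℝⁿ×ℝ×ℝⁿ with u₀y₀ + Σ_{j∈N} u_j y_j = 1, 0 ≤ y_j ≤ y₀ for all j ∈ N, y_j ≥ y_k for all (j,k) ∈ E, and Under(j,S) holds (with x_j in place of the binary variable) for every j ∈ N and every S ⊆ N\{j} }. -/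

import Mathlib

open Finset

theorem stmt18_decomp (n m : ℕ)
    (α0 : ℝ) (hα0 : 0 ≤ α0) (αon : Fin m → ℝ) (hαon : ∀ i, 0 ≤ αon i)
    (r0 : Fin n → ℝ) (hr0 : ∀ j, 0 ≤ r0 j)
    (r : Fin m → Fin n → ℝ) (hr : ∀ i j, 0 ≤ r i j)
    (u0 : ℝ) (hu0 : 0 < u0) (u : Fin n → ℝ) (hu : ∀ j, 0 ≤ u j)
    (θ : Fin m → Fin n → ℝ) (hθ : ∀ i j, 0 ≤ θ i j)
    (E : Set (Fin n × Fin n)) (M : ℝ)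
    (hM : ∀ S : Finset (Fin n), (∀ e ∈ E, e.2 ∈ S → e.1 ∈ S) →
      α0 * ((∑ j ∈ S, r0 j * u j) / (u0 + ∑ j ∈ S, u j)) +
        ∑ i, αon i * ∑ j ∈ S, r i j * θ i j ≤ M)
    (x : Fin n → ℝ) (y0 : ℝ) (y : Fin n → ℝ)
    (hsum : u0 * y0 + ∑ j, u j * y j = 1)
    (hy : ∀ j, 0 ≤ y j ∧ y j ≤ y0)
    (hE : ∀ e ∈ E, y e.2 ≤ y e.1)
    (hUnder : ∀ (j : Fin n) (S : Finset (Fin n)), j ∉ S →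
      (u0 + ∑ t ∈ insert j S, u t)⁻¹ * x j -
          ∑ t ∈ Finset.univ \ insert j S, u t * (u0 + ∑ s ∈ insert j S, u s)⁻¹ * y t
        ≤ y j) :
    α0 * ∑ j, r0 j * u j * y j + ∑ i, αon i * ∑ j, r i j * θ i j * x j ≤ M := by
  classical
  have hy0 : 0 ≤ y0 := by
    rcases Nat.eq_zero_or_pos n with h | h
    · subst h
      simp at hsum
      nlinarith
    · exact le_trans (hy ⟨0, h⟩).1 (hy ⟨0, h⟩).2
  set σ : Equiv.Perm (Fin n) := Tuple.sort y with hσdef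
  have hmono : Monotone (y ∘ σ) := Tuple.monotone_sort y
  set Y : ℕ → ℝ := fun k => if h : k < n then y (σ ⟨k, h⟩) else y0 with hYdef
  set Z : ℕ → ℝ := fun k => match k with | 0 => 0 | Nat.succ l => Y l with hZdef
  set D : ℕ → ℝ := fun k => Y k - Z k with hDdef
  set uσ : ℕ → ℝ := fun k => if h : k < n then u (σ ⟨k, h⟩) else 0 with huσdef
  set vσ : ℕ → ℝ := fun k => if h : k < n then u (σ ⟨k, h⟩) * y (σ ⟨k, h⟩) else 0 with hvσdef
  set T : ℕ → Finset (Fin n) := fun k => Finset.univ.filter (fun t => k ≤ ((σ.symm t : Fin n) : ℕ)) with hTdef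
  set W : ℕ → ℝ := fun k => u0 + ∑ t ∈ T k, u t with hWdef
  have hYt : ∀ t : Fin n, Y ((σ.symm t : Fin n) : ℕ) = y t := by
    intro t
    have h : ((σ.symm t : Fin n) : ℕ) < n := (σ.symm t).isLt
    simp only [hYdef, dif_pos h, Fin.eta, Equiv.apply_symm_apply]
  have hmonoY : Monotone Y := by
    apply monotone_nat_of_le_succ
    intro k
    by_cases h1 : k + 1 < n
    · have h0 : k < n := by omega
      simp only [hYdef, dif_pos h1, dif_pos h0]
      exact hmono (by exact_mod_cast Nat.le_succ k : (⟨k, h0⟩ : Fin n) ≤ ⟨k+1, h1⟩)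
    · by_cases h0 : k < n
      · simp only [hYdef, dif_pos h0, dif_neg h1]
        exact (hy _).2
      · simp only [hYdef, dif_neg h0, dif_neg h1, le_refl]
  have hDnn : ∀ k, 0 ≤ D k := by
    intro k
    match k with
    | 0 =>
      simp only [hDdef, hZdef]
      by_cases h : 0 < n
      · simp only [hYdef, dif_pos h]
        simpa using (hy _).1
      · simp only [hYdef, dif_neg h]
        simpa using hy0
    | Nat.succ l =>
      have : Y l ≤ Y (l+1) := hmonoY (Nat.le_succ l)
      simp only [hDdef, hZdef]
      linarith
  have hTmem : ∀ k (t : Fin n), t ∈ T k ↔ k ≤ ((σ.symm t : Fin n) : ℕ) := by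
    intro k t; simp [hTdef]
  have hTrec : ∀ (c : Fin n → ℝ) (k : ℕ), ∑ t ∈ T k, c t
      = ∑ t ∈ T (k+1), c t + (if h : k < n then c (σ ⟨k, h⟩) else 0) := by
    intro c k
    by_cases h : k < n
    · have hins : T k = insert (σ ⟨k, h⟩) (T (k+1)) := by
        ext t
        simp only [hTmem, Finset.mem_insert]
        constructor
        · intro ht
          by_cases hc : σ.symm t = ⟨k, h⟩
          · left
            rw [← hc, Equiv.apply_symm_apply]
          · right
            have hne : ((σ.symm t : Fin n) : ℕ) ≠ k := fun hh => hc (Fin.ext hh)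
            omega
        · rintro (rfl | ht)
          · simp
          · omega
      have hnot : σ ⟨k, h⟩ ∉ T (k+1) := by
        rw [hTmem]
        simp
      rw [hins, Finset.sum_insert hnot, dif_pos h]
      ring
    · have h1 : T k = T (k+1) := by
        ext t
        have := (σ.symm t).isLt
        simp only [hTmem]
        omega
      rw [h1, dif_neg h]
      ring
  have hT0 : T 0 = Finset.univ := by
    ext t; simp [hTmem]
  have hWrec : ∀ k, W k = W (k+1) + uσ k := by
    intro k
    simp only [hWdef, huσdef]
    rw [hTrec u k]
    ring
  have hWpos : ∀ k, 0 < W k := by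
    intro k
    have : 0 ≤ ∑ t ∈ T k, u t := Finset.sum_nonneg fun t _ => hu t
    simp only [hWdef]
    linarith
  have hvuY : ∀ k, vσ k = uσ k * Y k := by
    intro k
    by_cases h : k < n
    · simp only [hvσdef, huσdef, hYdef, dif_pos h]
    · simp only [hvσdef, huσdef, hYdef, dif_neg h]
      ring
  -- telescoping
  have KEY2 : ∀ i, ∑ k ∈ Finset.range (i+1), D k = Y i := by
    intro i
    induction i with
    | zero => simp [hDdef, hZdef]
    | succ l ih =>
      rw [Finset.sum_range_succ, ih]
      simp only [hDdef, hZdef]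
      ring
  have KEY : ∀ i, ∑ k ∈ Finset.range (i+1), D k * W k
      = W i * Y i + ∑ l ∈ Finset.range i, vσ l := by
    intro i
    induction i with
    | zero => simp [hDdef, hZdef]; ring
    | succ l ih =>
      rw [Finset.sum_range_succ, ih, Finset.sum_range_succ, hvuY l, hWrec l]
      have hD1 : D (l+1) = Y (l+1) - Y l := by simp [hDdef, hZdef]
      rw [hD1]
      ring
  -- partial sums of T-sums
  have hTsplit : ∀ (c : Fin n → ℝ) (i : ℕ), ∑ t ∈ T i, c t
      + ∑ l ∈ Finset.range i, (if h : l < n then c (σ ⟨l, h⟩) else 0) = ∑ t, c t := by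
    intro c i
    induction i with
    | zero => simp [hT0]
    | succ l ih =>
      rw [Finset.sum_range_succ, ← ih, hTrec c l]
      ring
  -- swap lemma
  have SWAP : ∀ g : Fin n → ℕ → ℝ,
      ∑ j, ∑ k ∈ Finset.range (((σ.symm j : Fin n) : ℕ)+1), g j k
        = ∑ k ∈ Finset.range (n+1), ∑ j ∈ T k, g j k := by
    intro g
    have h1 : ∀ j : Fin n, ∑ k ∈ Finset.range (((σ.symm j : Fin n) : ℕ)+1), g j k
        = ∑ k ∈ Finset.range (n+1), if k ≤ ((σ.symm j : Fin n) : ℕ) then g j k else 0 := by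
      intro j
      rw [Finset.sum_ite, Finset.sum_const_zero, add_zero]
      apply Finset.sum_congr _ (fun _ _ => rfl)
      ext k
      have := (σ.symm j).isLt
      simp only [Finset.mem_range, Finset.mem_filter]
      omega
    rw [Finset.sum_congr rfl fun j _ => h1 j, Finset.sum_comm]
    refine Finset.sum_congr rfl fun k _ => ?_
    rw [hTdef, Finset.sum_filter]
  have hSdiff : ∀ i, ∑ t ∈ Finset.univ \ T i, u t * y t = ∑ l ∈ Finset.range i, vσ l := by
    intro i
    have h1 := hTsplit (fun t => u t * y t) i
    have h2 : ∑ t ∈ Finset.univ \ T i, u t * y t + ∑ t ∈ T i, u t * y t = ∑ t, u t * y t :=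
      Finset.sum_sdiff (Finset.subset_univ _)
    have h3 : ∑ l ∈ Finset.range i, (if h : l < n then u (σ ⟨l, h⟩) * y (σ ⟨l, h⟩) else 0)
        = ∑ l ∈ Finset.range i, vσ l := rfl
    linarith
  have hXbound : ∀ j : Fin n, x j ≤ ∑ k ∈ Finset.range (((σ.symm j : Fin n) : ℕ)+1), D k * W k := by
    intro j
    set i : ℕ := ((σ.symm j : Fin n) : ℕ) with hidef
    have hjT : j ∈ T i := by rw [hTmem]
    have hins : insert j ((T i).erase j) = T i := Finset.insert_erase hjT
    have h1 := hUnder j ((T i).erase j) (Finset.notMem_erase _ _)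
    rw [hins] at h1
    have hWi : u0 + ∑ t ∈ T i, u t = W i := rfl
    rw [hWi] at h1
    have hWp := hWpos i
    have h2 : x j ≤ W i * y j + ∑ t ∈ Finset.univ \ T i, u t * y t := by
      have h3 : (W i)⁻¹ * x j ≤ y j + ∑ t ∈ Finset.univ \ T i, u t * (W i)⁻¹ * y t := by
        linarith
      have h4 := mul_le_mul_of_nonneg_left h3 hWp.le
      rw [← mul_assoc, mul_inv_cancel₀ hWp.ne', one_mul] at h4
      calc x j ≤ W i * (y j + ∑ t ∈ Finset.univ \ T i, u t * (W i)⁻¹ * y t) := h4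
        _ = W i * y j + ∑ t ∈ Finset.univ \ T i, (W i * (W i)⁻¹) * (u t * y t) := by
            rw [mul_add, Finset.mul_sum]
            congr 1
            exact Finset.sum_congr rfl fun t _ => by ring
        _ = W i * y j + ∑ t ∈ Finset.univ \ T i, u t * y t := by
            rw [mul_inv_cancel₀ hWp.ne']
            simp
    rw [KEY i, ← hSdiff i]
    have hYi : Y i = y j := hYt j
    rw [hYi]
    exact h2
  have hTclosed : ∀ k, D k ≠ 0 → ∀ e ∈ E, e.2 ∈ T k → e.1 ∈ T k := by
    intro k hk e he h2
    cases k with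
    | zero => rw [hTmem]; omega
    | succ l =>
      rw [hTmem] at h2 ⊢
      by_contra hc
      have h1 : ((σ.symm e.1 : Fin n) : ℕ) ≤ l := by omega
      have hlt : Y l < Y (l+1) := by
        have hnn := hDnn (l+1)
        have hD1 : D (l+1) = Y (l+1) - Y l := rfl
        rw [hD1] at hnn hk
        rcases lt_or_eq_of_le hnn with h | h
        · linarith
        · exact absurd h.symm (by simpa [sub_eq_zero] using hk)
      have ha : y e.1 ≤ Y l := by rw [← hYt e.1]; exact hmonoY h1
      have hb : Y (l+1) ≤ y e.2 := by rw [← hYt e.2]; exact hmonoY h2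
      have := hE e he
      linarith
  have hμsum : ∑ k ∈ Finset.range (n+1), D k * W k = 1 := by
    have hs : ∀ j : Fin n, ∑ k ∈ Finset.range (((σ.symm j : Fin n) : ℕ)+1), D k * u j
        = u j * y j := by
      intro j
      rw [← Finset.sum_mul, KEY2, hYt j]; ring
    have h2 := SWAP (fun j k => D k * u j)
    rw [Finset.sum_congr rfl fun j _ => hs j] at h2
    have hYn : Y n = y0 := by simp [hYdef]
    calc ∑ k ∈ Finset.range (n+1), D k * W k
        = ∑ k ∈ Finset.range (n+1), (D k * u0 + ∑ j ∈ T k, D k * u j) := by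
          refine Finset.sum_congr rfl fun k _ => ?_
          have : W k = u0 + ∑ t ∈ T k, u t := rfl
          rw [this, mul_add, Finset.mul_sum]
      _ = (∑ k ∈ Finset.range (n+1), D k) * u0
          + ∑ k ∈ Finset.range (n+1), ∑ j ∈ T k, D k * u j := by
          rw [Finset.sum_add_distrib, Finset.sum_mul]
      _ = y0 * u0 + ∑ j, u j * y j := by rw [KEY2 n, hYn, ← h2]
      _ = 1 := by linarith
  have hoff : ∑ j, r0 j * u j * y j
      = ∑ k ∈ Finset.range (n+1), D k * ∑ j ∈ T k, r0 j * u j := by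
    have hs : ∀ j : Fin n, r0 j * u j * y j
        = ∑ k ∈ Finset.range (((σ.symm j : Fin n):ℕ)+1), r0 j * u j * D k := by
      intro j
      rw [← Finset.mul_sum, KEY2, hYt j]
    rw [Finset.sum_congr rfl fun j _ => hs j]
    have h2 := SWAP (fun j k => r0 j * u j * D k)
    rw [h2]
    refine Finset.sum_congr rfl fun k _ => ?_
    rw [Finset.mul_sum]
    exact Finset.sum_congr rfl fun j _ => by ring
  set c' : Fin n → ℝ := fun j => ∑ i, αon i * (r i j * θ i j) with hc'def
  have hc'nn : ∀ j, 0 ≤ c' j := fun j => Finset.sum_nonneg fun i _ =>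
    mul_nonneg (hαon i) (mul_nonneg (hr i j) (hθ i j))
  have honeq : ∑ i, αon i * ∑ j, r i j * θ i j * x j = ∑ j, c' j * x j := by
    simp only [hc'def, Finset.mul_sum, Finset.sum_mul]
    rw [Finset.sum_comm]
    exact Finset.sum_congr rfl fun j _ => Finset.sum_congr rfl fun i _ => by ring
  have honbound : ∑ j, c' j * x j
      ≤ ∑ k ∈ Finset.range (n+1), (D k * W k) * ∑ j ∈ T k, c' j := by
    have h1 : ∑ j, c' j * x j
        ≤ ∑ j, c' j * ∑ k ∈ Finset.range (((σ.symm j : Fin n):ℕ)+1), D k * W k :=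
      Finset.sum_le_sum fun j _ => mul_le_mul_of_nonneg_left (hXbound j) (hc'nn j)
    have h2 := SWAP (fun j k => c' j * (D k * W k))
    calc ∑ j, c' j * x j
        ≤ ∑ j, c' j * ∑ k ∈ Finset.range (((σ.symm j : Fin n):ℕ)+1), D k * W k := h1
      _ = ∑ j, ∑ k ∈ Finset.range (((σ.symm j : Fin n):ℕ)+1), c' j * (D k * W k) := by
          exact Finset.sum_congr rfl fun j _ => Finset.mul_sum _ _ _
      _ = ∑ k ∈ Finset.range (n+1), ∑ j ∈ T k, c' j * (D k * W k) := h2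
      _ = ∑ k ∈ Finset.range (n+1), (D k * W k) * ∑ j ∈ T k, c' j := by
          refine Finset.sum_congr rfl fun k _ => ?_
          rw [Finset.mul_sum]
          exact Finset.sum_congr rfl fun j _ => by ring
  have hval : ∀ k ∈ Finset.range (n+1),
      α0 * (D k * ∑ j ∈ T k, r0 j * u j) + (D k * W k) * ∑ j ∈ T k, c' j
        ≤ (D k * W k) * M := by
    intro k _
    rcases eq_or_ne (D k) 0 with h0 | h0
    · simp [h0]
    · have hval1 := hM (T k) (hTclosed k h0)
      have hWk : (u0 + ∑ j ∈ T k, u j) = W k := rfl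
      rw [hWk] at hval1
      have hc's : ∑ j ∈ T k, c' j = ∑ i, αon i * ∑ j ∈ T k, r i j * θ i j := by
        simp only [hc'def, Finset.mul_sum]
        rw [Finset.sum_comm]
      rw [hc's]
      have hDk : 0 < D k := lt_of_le_of_ne (hDnn k) (Ne.symm h0)
      have hWk' := hWpos k
      have hμ : 0 ≤ D k * W k := le_of_lt (mul_pos hDk hWk')
      calc α0 * (D k * ∑ j ∈ T k, r0 j * u j)
            + (D k * W k) * (∑ i, αon i * ∑ j ∈ T k, r i j * θ i j)
          = (D k * W k) * (α0 * ((∑ j ∈ T k, r0 j * u j) / W k)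
            + ∑ i, αon i * ∑ j ∈ T k, r i j * θ i j) := by
            field_simp
        _ ≤ (D k * W k) * M := mul_le_mul_of_nonneg_left hval1 hμ
  calc α0 * ∑ j, r0 j * u j * y j + ∑ i, αon i * ∑ j, r i j * θ i j * x j
      = ∑ k ∈ Finset.range (n+1), α0 * (D k * ∑ j ∈ T k, r0 j * u j) + ∑ j, c' j * x j := by
        rw [hoff, honeq, Finset.mul_sum]
    _ ≤ ∑ k ∈ Finset.range (n+1), α0 * (D k * ∑ j ∈ T k, r0 j * u j)
        + ∑ k ∈ Finset.range (n+1), (D k * W k) * ∑ j ∈ T k, c' j := by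
        linarith
    _ = ∑ k ∈ Finset.range (n+1),
        (α0 * (D k * ∑ j ∈ T k, r0 j * u j) + (D k * W k) * ∑ j ∈ T k, c' j) := by
        rw [Finset.sum_add_distrib]
    _ ≤ ∑ k ∈ Finset.range (n+1), (D k * W k) * M := Finset.sum_le_sum hval
    _ = M := by rw [← Finset.sum_mul, hμsum, one_mul]
/-- The optimal value of (QAP-IDM) equals the optimal value of the LP (QAP-IDM-LP)
built from the `Under` inequalities, under precedence constraints `E` on the offline
assortment, with offline MNL demand and online independent demand. -/
theorem stmt18 (n m : ℕ) (hn : 1 ≤ n)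
    (α0 : ℝ) (hα0 : 0 ≤ α0) (αon : Fin m → ℝ) (hαon : ∀ i, 0 ≤ αon i)
    (r0 : Fin n → ℝ) (hr0 : ∀ j, 0 ≤ r0 j)
    (r : Fin m → Fin n → ℝ) (hr : ∀ i j, 0 ≤ r i j)
    (u0 : ℝ) (hu0 : 0 < u0) (u : Fin n → ℝ) (hu : ∀ j, 0 ≤ u j)
    (θ : Fin m → Fin n → ℝ) (hθ : ∀ i j, 0 < θ i j)
    (E : Set (Fin n × Fin n)) :
    sSup {v : ℝ | ∃ (x0 : Fin n → ℝ) (x : Fin m → Fin n → ℝ),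
        (∀ j, x0 j = 0 ∨ x0 j = 1) ∧ (∀ i j, x i j = 0 ∨ x i j = 1) ∧
        (∀ i j, x i j ≤ x0 j) ∧
        (∀ e ∈ E, x0 e.2 ≤ x0 e.1) ∧
        v = α0 * ((∑ j, r0 j * u j * x0 j) / (u0 + ∑ j, u j * x0 j)) +
            ∑ i, αon i * ∑ j, r i j * θ i j * x i j} =
    sSup {v : ℝ | ∃ (x : Fin n → ℝ) (y0 : ℝ) (y : Fin n → ℝ),
        u0 * y0 + ∑ j, u j * y j = 1 ∧
        (∀ j, 0 ≤ y j ∧ y j ≤ y0) ∧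
        (∀ e ∈ E, y e.2 ≤ y e.1) ∧
        (∀ (j : Fin n) (S : Finset (Fin n)), j ∉ S →
          (u0 + ∑ t ∈ insert j S, u t)⁻¹ * x j -
              ∑ t ∈ Finset.univ \ insert j S, u t * (u0 + ∑ s ∈ insert j S, u s)⁻¹ * y t
            ≤ y j) ∧
        v = α0 * ∑ j, r0 j * u j * y j +
            ∑ i, αon i * ∑ j, r i j * θ i j * x j} := by
  classical
  set A : Set ℝ := {v : ℝ | ∃ (x0 : Fin n → ℝ) (x : Fin m → Fin n → ℝ),
        (∀ j, x0 j = 0 ∨ x0 j = 1) ∧ (∀ i j, x i j = 0 ∨ x i j = 1) ∧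
        (∀ i j, x i j ≤ x0 j) ∧
        (∀ e ∈ E, x0 e.2 ≤ x0 e.1) ∧
        v = α0 * ((∑ j, r0 j * u j * x0 j) / (u0 + ∑ j, u j * x0 j)) +
            ∑ i, αon i * ∑ j, r i j * θ i j * x i j} with hAdef
  set B : Set ℝ := {v : ℝ | ∃ (x : Fin n → ℝ) (y0 : ℝ) (y : Fin n → ℝ),
        u0 * y0 + ∑ j, u j * y j = 1 ∧
        (∀ j, 0 ≤ y j ∧ y j ≤ y0) ∧
        (∀ e ∈ E, y e.2 ≤ y e.1) ∧
        (∀ (j : Fin n) (S : Finset (Fin n)), j ∉ S →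
          (u0 + ∑ t ∈ insert j S, u t)⁻¹ * x j -
              ∑ t ∈ Finset.univ \ insert j S, u t * (u0 + ∑ s ∈ insert j S, u s)⁻¹ * y t
            ≤ y j) ∧
        v = α0 * ∑ j, r0 j * u j * y j +
            ∑ i, αon i * ∑ j, r i j * θ i j * x j} with hBdef
  -- integer points belong to A
  have hmemA : ∀ S : Finset (Fin n), (∀ e ∈ E, e.2 ∈ S → e.1 ∈ S) →
      α0 * ((∑ j ∈ S, r0 j * u j) / (u0 + ∑ j ∈ S, u j)) +
        ∑ i, αon i * ∑ j ∈ S, r i j * θ i j ∈ A := by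
    intro S hS
    rw [hAdef]
    refine ⟨fun j => if j ∈ S then 1 else 0, fun _ j => if j ∈ S then 1 else 0,
      ?_, ?_, ?_, ?_, ?_⟩
    · intro j; by_cases h : j ∈ S <;> simp [h]
    · intro i j; by_cases h : j ∈ S <;> simp [h]
    · intro i j; exact le_refl _
    · intro e he
      by_cases h2 : e.2 ∈ S
      · simp [h2, hS e he h2]
      · simp only [if_neg h2]
        split <;> norm_num
    · have h1 : ∀ c : Fin n → ℝ, ∑ j, c j * (if j ∈ S then (1:ℝ) else 0) = ∑ j ∈ S, c j := by
        intro c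
        simp [mul_ite, Finset.sum_ite_mem]
      have h2 : ∀ c : Fin n → ℝ, ∑ j, (c j * if j ∈ S then (1:ℝ) else 0) = ∑ j ∈ S, c j := h1
      congr 1
      · congr 2
        · exact (h1 (fun j => r0 j * u j)).symm
        · simp only []
          rw [h1 u]
      · refine Finset.sum_congr rfl fun i _ => ?_
        congr 1
        exact (h1 (fun j => r i j * θ i j)).symm
  have hAne : A.Nonempty := ⟨_, hmemA ∅ (fun e _ h => absurd h (Finset.notMem_empty _))⟩
  -- A is bounded above
  have hAbdd : BddAbove A := by
    refine ⟨α0 * ((∑ j, r0 j * u j) / u0) + ∑ i, αon i * ∑ j, r i j * θ i j, ?_⟩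
    rintro a ⟨x0, x, hx0, hx, hxle, hEc, rfl⟩
    have hx01 : ∀ j, 0 ≤ x0 j ∧ x0 j ≤ 1 := by
      intro j; rcases hx0 j with h | h <;> simp [h]
    have hx01' : ∀ i j, 0 ≤ x i j ∧ x i j ≤ 1 := by
      intro i j; rcases hx i j with h | h <;> simp [h]
    have hnum0 : 0 ≤ ∑ j, r0 j * u j * x0 j :=
      Finset.sum_nonneg fun j _ => mul_nonneg (mul_nonneg (hr0 j) (hu j)) (hx01 j).1
    have hnum1 : ∑ j, r0 j * u j * x0 j ≤ ∑ j, r0 j * u j := by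
      refine Finset.sum_le_sum fun j _ => ?_
      nlinarith [(hx01 j).2, mul_nonneg (hr0 j) (hu j)]
    have hden : u0 ≤ u0 + ∑ j, u j * x0 j := by
      have : 0 ≤ ∑ j, u j * x0 j :=
        Finset.sum_nonneg fun j _ => mul_nonneg (hu j) (hx01 j).1
      linarith
    have hratio : (∑ j, r0 j * u j * x0 j) / (u0 + ∑ j, u j * x0 j)
        ≤ (∑ j, r0 j * u j) / u0 :=
      div_le_div₀ (le_trans hnum0 hnum1) hnum1 hu0 hden
    have hon : ∑ i, αon i * ∑ j, r i j * θ i j * x i j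
        ≤ ∑ i, αon i * ∑ j, r i j * θ i j := by
      refine Finset.sum_le_sum fun i _ => mul_le_mul_of_nonneg_left ?_ (hαon i)
      refine Finset.sum_le_sum fun j _ => ?_
      nlinarith [(hx01' i j).2, mul_nonneg (hr i j) (hθ i j).le]
    have := mul_le_mul_of_nonneg_left hratio hα0
    linarith
  -- hard direction: every element of B is at most sSup A
  have hhard : ∀ v ∈ B, v ≤ sSup A := by
    intro v hv
    rw [hBdef] at hv
    obtain ⟨x, y0, y, hsum, hy, hEc, hUnder, rfl⟩ := hv
    exact stmt18_decomp n m α0 hα0 αon hαon r0 hr0 r hr u0 hu0 u hu θ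
      (fun i j => (hθ i j).le) E (sSup A)
      (fun S hS => le_csSup hAbdd (hmemA S hS)) x y0 y hsum hy hEc hUnder
  have hBbdd : BddAbove B := ⟨sSup A, hhard⟩
  have hBne : B.Nonempty := by
    refine ⟨0, ?_⟩
    rw [hBdef]
    refine ⟨fun _ => 0, u0⁻¹, fun _ => 0, by simp [mul_inv_cancel₀ hu0.ne'], ?_, ?_, ?_, by simp⟩
    · intro j; constructor
      · exact le_refl _
      · positivity
    · intro e _; exact le_refl _
    · intro j S hjS
      simp
  -- easy direction: every element of A is at most sSup B
  have heasy : ∀ a ∈ A, a ≤ sSup B := by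
    intro a ha
    rw [hAdef] at ha
    obtain ⟨x0, x, hx0, hx, hxle, hEc, rfl⟩ := ha
    have hx01 : ∀ j, 0 ≤ x0 j ∧ x0 j ≤ 1 := by
      intro j; rcases hx0 j with h | h <;> simp [h]
    set Dd : ℝ := u0 + ∑ j, u j * x0 j with hDd
    have hDpos : 0 < Dd := by
      have : 0 ≤ ∑ j, u j * x0 j :=
        Finset.sum_nonneg fun j _ => mul_nonneg (hu j) (hx01 j).1
      rw [hDd]; linarith
    have hb : (α0 * ∑ j, r0 j * u j * (x0 j * Dd⁻¹) +
        ∑ i, αon i * ∑ j, r i j * θ i j * x0 j) ∈ B := by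
      rw [hBdef]
      refine ⟨x0, Dd⁻¹, fun j => x0 j * Dd⁻¹, ?_, ?_, ?_, ?_, rfl⟩
      · simp only []
        have h1 : ∑ j, u j * (x0 j * Dd⁻¹) = (∑ j, u j * x0 j) * Dd⁻¹ := by
          rw [Finset.sum_mul]
          exact Finset.sum_congr rfl fun j _ => by ring
        rw [h1]
        have : u0 * Dd⁻¹ + (∑ j, u j * x0 j) * Dd⁻¹ = Dd * Dd⁻¹ := by
          rw [hDd]; ring
        rw [this, mul_inv_cancel₀ hDpos.ne']
      · intro j
        simp only []
        constructor
        · exact mul_nonneg (hx01 j).1 (inv_nonneg.2 hDpos.le)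
        · nlinarith [(hx01 j).2, inv_nonneg.2 hDpos.le]
      · intro e he
        simp only []
        exact mul_le_mul_of_nonneg_right (hEc e he) (inv_nonneg.2 hDpos.le)
      · intro j S hjS
        simp only []
        have hP0 : 0 ≤ ∑ t ∈ insert j S, u t := Finset.sum_nonneg fun t _ => hu t
        have hβpos : (0:ℝ) < u0 + ∑ t ∈ insert j S, u t := by linarith
        rcases hx0 j with h0 | h1
        · rw [h0]
          have hnn : 0 ≤ ∑ t ∈ Finset.univ \ insert j S,
              u t * (u0 + ∑ s ∈ insert j S, u s)⁻¹ * (x0 t * Dd⁻¹) :=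
            Finset.sum_nonneg fun t _ =>
              mul_nonneg (mul_nonneg (hu t) (inv_nonneg.2 hβpos.le))
                (mul_nonneg (hx01 t).1 (inv_nonneg.2 hDpos.le))
          have : (u0 + ∑ t ∈ insert j S, u t)⁻¹ * 0 = 0 := by ring
          rw [this]
          linarith
        · rw [h1]
          set β : ℝ := (u0 + ∑ t ∈ insert j S, u t)⁻¹ with hβ
          set Q : ℝ := ∑ t ∈ Finset.univ \ insert j S, u t * x0 t with hQdef
          have hQ : ∑ t ∈ Finset.univ \ insert j S,
              u t * (u0 + ∑ s ∈ insert j S, u s)⁻¹ * (x0 t * Dd⁻¹) = Q * (β * Dd⁻¹) := by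
            rw [hQdef, Finset.sum_mul]
            exact Finset.sum_congr rfl fun t _ => by rw [hβ]; ring
          rw [hQ]
          have hsplit : Q + ∑ t ∈ insert j S, u t * x0 t = ∑ t, u t * x0 t := by
            rw [hQdef]
            exact Finset.sum_sdiff (Finset.subset_univ _)
          have hle : ∑ t ∈ insert j S, u t * x0 t ≤ ∑ t ∈ insert j S, u t := by
            refine Finset.sum_le_sum fun t _ => ?_
            nlinarith [(hx01 t).2, hu t]
          have hkey : Dd - Q ≤ u0 + ∑ t ∈ insert j S, u t := by
            rw [hDd]; linarith
          have hβD : β * (Dd - Q) ≤ 1 := by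
            have h4 := mul_le_mul_of_nonneg_left hkey (inv_nonneg.2 hβpos.le)
            rw [← hβ] at h4
            have h5 : β * (u0 + ∑ t ∈ insert j S, u t) = 1 := by
              rw [hβ]; exact inv_mul_cancel₀ hβpos.ne'
            linarith
          have h6 : Dd * Dd⁻¹ = 1 := mul_inv_cancel₀ hDpos.ne'
          have h7 : β * 1 - Q * (β * Dd⁻¹) = (β * (Dd - Q)) * Dd⁻¹ := by
            linear_combination (-β) * h6
          rw [h7]
          calc (β * (Dd - Q)) * Dd⁻¹ ≤ 1 * Dd⁻¹ :=
                mul_le_mul_of_nonneg_right hβD (inv_nonneg.2 hDpos.le)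
            _ = 1 * Dd⁻¹ := rfl
    refine le_trans ?_ (le_csSup hBbdd hb)
    have hfirst : ∑ j, r0 j * u j * (x0 j * Dd⁻¹) = (∑ j, r0 j * u j * x0 j) / Dd := by
      rw [div_eq_mul_inv, Finset.sum_mul]
      exact Finset.sum_congr rfl fun j _ => by ring
    rw [hfirst]
    have hsecond : ∑ i, αon i * ∑ j, r i j * θ i j * x i j
        ≤ ∑ i, αon i * ∑ j, r i j * θ i j * x0 j := by
      refine Finset.sum_le_sum fun i _ => mul_le_mul_of_nonneg_left ?_ (hαon i)
      refine Finset.sum_le_sum fun j _ => ?_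
      exact mul_le_mul_of_nonneg_left (hxle i j) (mul_nonneg (hr i j) (hθ i j).le)
    linarith
  exact le_antisymm (csSup_le hAne heasy) (csSup_le hBne hhard)
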